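/- arXiv:hep-th/9206057 — 3 statements merged into one kernel-verified Lean document; each statement's English description precedes it below -/
import Mathlib

section
/- For complex parameters α, β and a nonnegative integer n, ∑_{k=0}^{n} [α+n-k choose n-k]_q [β+k choose k]_q q^{-k(α+β+2)} = [α+β+n+1 choose n]_q q^{-n(1+β)}. -/
set_option maxHeartbeats 1000000

open Finset

/-- `q^x` for complex exponent, via `exp (x log q)`. -/
noncomputable def Qp (q x : ℂ) : ℂ := Complex.exp (x * Complex.log q)

/-- q-integer `[x]_q = (q^x - q^{-x})/(q - q⁻¹)`. -/
noncomputable def qint (q x : ℂ) : ℂ := (Qp q x - Qp q (-x)) / (q - q⁻¹)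

/-- q-factorial `[n]_q! = ∏_{k=1}^n [k]_q`. -/
noncomputable def qfact (q : ℂ) (n : ℕ) : ℂ := ∏ k ∈ Finset.Icc 1 n, qint q (k : ℂ)

/-- q-binomial coefficient for natural arguments, `[m]!/([m-k]![k]!)`. -/
noncomputable def qchoose (q : ℂ) (m k : ℕ) : ℂ := qfact q m / (qfact q (m - k) * qfact q k)

/-- falling q-factorial `[α; k]! = ∏_{j=0}^{k-1} [α-j]_q`. -/
noncomputable def qfall (q α : ℂ) (k : ℕ) : ℂ := ∏ j ∈ Finset.range k, qint q (α - (j : ℂ))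

/-- generalized q-binomial `[α choose k]_q = [α;k]!/[k]!`. -/
noncomputable def qbinom (q α : ℂ) (k : ℕ) : ℂ := qfall q α k / qfact q k

lemma Qp_zero (q : ℂ) : Qp q 0 = 1 := by simp [Qp]

lemma Qp_add (q x y : ℂ) : Qp q (x + y) = Qp q x * Qp q y := by
  rw [Qp, Qp, Qp, add_mul, Complex.exp_add]

lemma qbinom_succ (q x : ℂ) (m : ℕ) :
    qbinom q x (m + 1) = qint q x / qint q ((m : ℂ) + 1) * qbinom q (x - 1) m := by
  unfold qbinom qfall qfact
  rw [Finset.prod_range_succ', Finset.prod_Icc_succ_top (Nat.le_add_left 1 m)]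
  rw [Finset.prod_congr rfl (fun j _ => show qint q (x - ((j:ℕ)+1 : ℕ)) = qint q (x - 1 - (j:ℂ)) by
    rw [show (((j:ℕ)+1 : ℕ) : ℂ) = (j:ℂ) + 1 by push_cast; ring,
        show x - ((j:ℂ)+1) = x - 1 - (j:ℂ) by ring])]
  rw [show (((m:ℕ)+1 : ℕ) : ℂ) = (m:ℂ) + 1 by push_cast; ring]
  rw [Nat.cast_zero, sub_zero]; ring

lemma qbinom_succ_mul (q x : ℂ) (m : ℕ) (h : qint q ((m : ℂ) + 1) ≠ 0) :
    qbinom q x (m + 1) * qint q ((m : ℂ) + 1) = qint q x * qbinom q (x - 1) m := by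
  rw [qbinom_succ]
  field_simp

lemma bracketN (q α β μ κ : ℂ) :
    (Qp q (α + μ + 1 - κ) - Qp q (-(α + μ + 1 - κ))) * (Qp q (μ + 1) - Qp q (-(μ + 1)))
      - (Qp q (α + β + μ + 2) - Qp q (-(α + β + μ + 2))) * Qp q (-(1 + β))
          * (Qp q (μ - κ + 1) - Qp q (-(μ - κ + 1)))
    = -(Qp q (κ - μ) * (Qp q (β + κ + 1) - Qp q (-(β + κ + 1))) * Qp q (-(α + β + 2))
          * (Qp q (μ - κ + 1) - Qp q (-(μ - κ + 1))))
      + Qp q (κ - μ - 1) * (Qp q κ - Qp q (-κ)) * (Qp q (α + μ + 1 - κ) - Qp q (-(α + μ + 1 - κ))) := by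
  simp only [mul_sub, sub_mul, ← Qp_add]
  ring_nf

lemma bracket (q α β μ κ : ℂ) :
    qint q (α + μ + 1 - κ) * qint q (μ + 1)
      - qint q (α + β + μ + 2) * Qp q (-(1 + β)) * qint q (μ - κ + 1)
    = -(Qp q (κ - μ) * qint q (β + κ + 1) * Qp q (-(α + β + 2)) * qint q (μ - κ + 1))
      + Qp q (κ - μ - 1) * qint q κ * qint q (α + μ + 1 - κ) := by
  simp only [qint]
  linear_combination ((q - q⁻¹)⁻¹ * (q - q⁻¹)⁻¹) * bracketN q α β μ κ

lemma keylem (q α β : ℂ) (n k : ℕ) (hk : k ≤ n)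
    (h2 : qint q ((n : ℂ) - (k : ℂ) + 1) ≠ 0) (h3 : qint q ((k : ℂ) + 1) ≠ 0) :
    qint q ((n : ℂ) + 1) *
        (qbinom q (α + ((n+1 : ℕ) : ℂ) - (k : ℂ)) (n + 1 - k) * qbinom q (β + (k : ℂ)) k *
          Qp q (-((k : ℂ) * (α + β + 2))))
      - qint q (α + β + (n : ℂ) + 2) * Qp q (-(1 + β)) *
        (qbinom q (α + (n : ℂ) - (k : ℂ)) (n - k) * qbinom q (β + (k : ℂ)) k *
          Qp q (-((k : ℂ) * (α + β + 2))))
    = -(Qp q (((k+1 : ℕ) : ℂ) - (n : ℂ) - 1) * qint q ((k+1 : ℕ) : ℂ)) *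
        (qbinom q (α + ((n+1 : ℕ) : ℂ) - ((k+1 : ℕ) : ℂ)) (n + 1 - (k+1)) *
          qbinom q (β + ((k+1 : ℕ) : ℂ)) (k+1) * Qp q (-(((k+1 : ℕ) : ℂ) * (α + β + 2))))
      - -(Qp q ((k : ℂ) - (n : ℂ) - 1) * qint q (k : ℂ)) *
        (qbinom q (α + ((n+1 : ℕ) : ℂ) - (k : ℂ)) (n + 1 - k) * qbinom q (β + (k : ℂ)) k *
          Qp q (-((k : ℂ) * (α + β + 2)))) := by
  have hcast : ((n - k : ℕ) : ℂ) = (n : ℂ) - (k : ℂ) := Nat.cast_sub hk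
  push_cast
  rw [show α + ((n:ℂ)+1) - (k:ℂ) = α + (n:ℂ) + 1 - (k:ℂ) by ring]
  rw [show α + ((n:ℂ)+1) - ((k:ℂ)+1) = α + (n:ℂ) - (k:ℂ) by ring]
  rw [show (k:ℂ) + 1 - (n:ℂ) - 1 = (k:ℂ) - (n:ℂ) by ring]
  rw [show β + ((k:ℂ)+1) = β + (k:ℂ) + 1 by ring]
  rw [show -(((k:ℂ)+1) * (α+β+2)) = -((k:ℂ)*(α+β+2)) + -(α+β+2) by ring, Qp_add]
  have hn1k : n + 1 - k = (n - k) + 1 := by omega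
  have hrel : qbinom q (α + (n:ℂ) + 1 - (k:ℂ)) (n + 1 - k) * qint q ((n:ℂ) - (k:ℂ) + 1)
      = qint q (α + (n:ℂ) + 1 - (k:ℂ)) * qbinom q (α + (n:ℂ) - (k:ℂ)) (n - k) := by
    have h := qbinom_succ_mul q (α + (n:ℂ) + 1 - (k:ℂ)) (n-k) (by rw [hcast]; exact h2)
    rw [hcast, show α + (n:ℂ) + 1 - (k:ℂ) - 1 = α + (n:ℂ) - (k:ℂ) by ring] at h
    rw [hn1k]; exact h
  have hrel2 : qbinom q (β + (k:ℂ) + 1) (k+1) * qint q ((k:ℂ) + 1)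
      = qint q (β + (k:ℂ) + 1) * qbinom q (β + (k:ℂ)) k := by
    have h := qbinom_succ_mul q (β + (k:ℂ) + 1) k h3
    rw [show β + (k:ℂ) + 1 - 1 = β + (k:ℂ) by ring] at h
    exact h
  have hbr := bracket q α β (n:ℂ) (k:ℂ)
  apply mul_left_cancel₀ h2
  linear_combination
      (qbinom q (α + (n:ℂ) - (k:ℂ)) (n-k) * qbinom q (β + (k:ℂ)) k *
        Qp q (-((k:ℂ)*(α+β+2)))) * hbr
    + ((qint q ((n:ℂ)+1) - Qp q ((k:ℂ)-(n:ℂ)-1) * qint q (k:ℂ)) * qbinom q (β + (k:ℂ)) k *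
        Qp q (-((k:ℂ)*(α+β+2)))) * hrel
    + (Qp q ((k:ℂ)-(n:ℂ)) * qbinom q (α + (n:ℂ) - (k:ℂ)) (n-k) * Qp q (-((k:ℂ)*(α+β+2))) *
        Qp q (-(α+β+2)) * qint q ((n:ℂ)-(k:ℂ)+1)) * hrel2

theorem qbinom_convolution (q α β : ℂ) (n : ℕ) (hq : q ≠ 0) (hq2 : q ^ 2 ≠ 1)
    (hgen : ∀ k : ℕ, 1 ≤ k → qint q (k : ℂ) ≠ 0) :
    ∑ k ∈ Finset.range (n + 1),
        qbinom q (α + (n : ℂ) - (k : ℂ)) (n - k) * qbinom q (β + (k : ℂ)) k *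
          Qp q (-((k : ℂ) * (α + β + 2))) =
      qbinom q (α + β + (n : ℂ) + 1) n * Qp q (-((n : ℂ) * (1 + β))) := by
  induction n with
  | zero => simp [qbinom, qfall, qfact, Qp]
  | succ n IH =>
    have hV1 : qint q ((n:ℂ) + 1) ≠ 0 := by
      have h := hgen (n+1) (by omega); rwa [Nat.cast_add, Nat.cast_one] at h
    set c : ℂ := qint q (α + β + (n:ℂ) + 2) * Qp q (-(1 + β)) with hc
    set F1 : ℕ → ℂ := fun j => qbinom q (α + ((n+1 : ℕ) : ℂ) - (j : ℂ)) (n + 1 - j) *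
        qbinom q (β + (j : ℂ)) j * Qp q (-((j : ℂ) * (α + β + 2))) with hF1f
    set G : ℕ → ℂ := fun j => -(Qp q ((j:ℂ) - (n:ℂ) - 1) * qint q (j:ℂ)) * F1 j with hGf
    have htel : ∑ k ∈ Finset.range (n+1),
        (qint q ((n:ℂ)+1) * F1 k
          - c * (qbinom q (α + (n : ℂ) - (k : ℂ)) (n - k) * qbinom q (β + (k : ℂ)) k *
              Qp q (-((k : ℂ) * (α + β + 2)))))
        = G (n+1) - G 0 := by
      rw [← Finset.sum_range_sub G (n+1)]
      refine Finset.sum_congr rfl fun k hk => ?_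
      have hk' : k ≤ n := by have := Finset.mem_range.mp hk; omega
      have h2 : qint q ((n:ℂ)-(k:ℂ)+1) ≠ 0 := by
        have h := hgen (n-k+1) (by omega)
        rwa [show ((n-k+1:ℕ):ℂ) = (n:ℂ)-(k:ℂ)+1 by push_cast [Nat.cast_sub hk']; ring] at h
      have h3 : qint q ((k:ℂ)+1) ≠ 0 := by
        have h := hgen (k+1) (by omega); rwa [Nat.cast_add, Nat.cast_one] at h
      simp only [hc, hF1f, hGf]
      exact keylem q α β n k hk' h2 h3
    have hG0 : G 0 = 0 := by
      simp [hGf, hF1f, qint, Qp_zero]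
    have hGn : G (n+1) = -(qint q ((n:ℂ)+1) * F1 (n+1)) := by
      simp only [hGf]
      rw [show (((n+1:ℕ)):ℂ) - (n:ℂ) - 1 = 0 by push_cast; ring, Qp_zero,
          show (((n+1:ℕ)):ℂ) = (n:ℂ)+1 by push_cast; ring]
      ring
    rw [Finset.sum_sub_distrib, ← Finset.mul_sum, ← Finset.mul_sum, IH, hG0, hGn] at htel
    have hrhs : qint q ((n:ℂ)+1) *
        (qbinom q (α + β + ((n+1:ℕ):ℂ) + 1) (n+1) * Qp q (-(((n+1:ℕ):ℂ) * (1+β))))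
        = c * (qbinom q (α + β + (n:ℂ) + 1) n * Qp q (-((n:ℂ)*(1+β)))) := by
      have h := qbinom_succ_mul q (α + β + (n:ℂ) + 2) n hV1
      rw [show α + β + (n:ℂ) + 2 - 1 = α + β + (n:ℂ) + 1 by ring] at h
      rw [show α + β + ((n+1:ℕ):ℂ) + 1 = α + β + (n:ℂ) + 2 by push_cast; ring,
          show -(((n+1:ℕ):ℂ)*(1+β)) = -((n:ℂ)*(1+β)) + -(1+β) by push_cast; ring, Qp_add, hc]
      linear_combination (Qp q (-((n:ℂ)*(1+β))) * Qp q (-(1+β))) * h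
    apply mul_left_cancel₀ hV1
    rw [Finset.sum_range_succ]
    linear_combination htel - hrhs
end

section
/- Verification of the recurrence for the auxiliary function f: the function f(n;z₁,z₂,z) = f_n [z₁]![z₂]! ∑_t (-1)^t q^{t(2p+1−z)} [z choose t]_q ([2p₁−z₁+t; t]! [2p₂−z₂+z−t; z−t]!)/([z₁−t]![z₂−z+t]!) satisfies the recurrence f(n;z₁,z₂+1,z+1) = −[z₁]_q[2p₁+1−z₁]_q q^{2p−2z} f(n;z₁−1,z₂+1,z) + [2p₂−z₂]_q[z₂+1]_q f(n;z₁,z₂,z), as a consequence of the q-Pascal identity [n−1 choose m]_q + q^{±n}[n−1 choose m−1]_q = q^{±m}[n choose m]_q. -/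
open Finset

/-- The auxiliary function `f(n; z₁, z₂, z)` from Racah's derivation of the CGC,
with `p = p₁ + p₂ - n` and an arbitrary constant `fn` depending only on `n`;
the sum over `t` is supported where the factorials in the denominator are defined. -/
noncomputable def auxf (q p₁ p₂ fn : ℂ) (n z₁ z₂ z : ℕ) : ℂ :=
  fn * qfact q z₁ * qfact q z₂ *
    ∑ t ∈ (Finset.range (z + 1)).filter fun t => t ≤ z₁ ∧ z ≤ z₂ + t,
      (-1 : ℂ) ^ t * Qp q ((t : ℂ) * (2 * (p₁ + p₂ - (n : ℂ)) + 1 - (z : ℂ))) *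
        qchoose q z t *
        qfall q (2 * p₁ - (z₁ : ℂ) + (t : ℂ)) t *
        qfall q (2 * p₂ - (z₂ : ℂ) + (z : ℂ) - (t : ℂ)) (z - t) /
        (qfact q (z₁ - t) * qfact q (z₂ + t - z))

lemma qint_zero (q : ℂ) : qint q 0 = 0 := by simp [qint, Qp]

lemma qfact_zero (q : ℂ) : qfact q 0 = 1 := by simp [qfact]

lemma qfall_zero (q α : ℂ) : qfall q α 0 = 1 := by simp [qfall]

lemma qfact_succ (q : ℂ) (n : ℕ) : qfact q (n+1) = qfact q n * qint q ((n:ℂ)+1) := by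
  rw [qfact, Finset.prod_Icc_succ_top (by omega)]; push_cast; rfl

lemma qfact_ne_zero (q : ℂ) (hgen : ∀ k : ℕ, 1 ≤ k → qint q (k : ℂ) ≠ 0) (n : ℕ) :
    qfact q n ≠ 0 := by
  apply Finset.prod_ne_zero_iff.2
  intro k hk
  exact hgen k (Finset.mem_Icc.1 hk).1

lemma qfall_succ (q α : ℂ) (k : ℕ) : qfall q α (k+1) = qfall q α k * qint q (α - k) := by
  rw [qfall, Finset.prod_range_succ]; rfl

lemma qint_split (q : ℂ) (a b : ℂ) :
    qint q a = Qp q b * qint q (a - b) + Qp q (b - a) * qint q b := by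
  simp only [qint, mul_div_assoc', ← add_div]
  congr 1
  simp only [mul_sub, ← Qp_add]
  ring_nf

lemma qchoose_zero (q : ℂ) (hgen : ∀ k : ℕ, 1 ≤ k → qint q (k : ℂ) ≠ 0) (m : ℕ) :
    qchoose q m 0 = 1 := by
  rw [qchoose, Nat.sub_zero, qfact_zero, mul_one, div_self (qfact_ne_zero q hgen m)]

lemma qchoose_self (q : ℂ) (hgen : ∀ k : ℕ, 1 ≤ k → qint q (k : ℂ) ≠ 0) (m : ℕ) :
    qchoose q m m = 1 := by
  rw [qchoose, Nat.sub_self, qfact_zero, one_mul, div_self (qfact_ne_zero q hgen m)]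

lemma pascal (q : ℂ) (hgen : ∀ k : ℕ, 1 ≤ k → qint q (k : ℂ) ≠ 0) (z t : ℕ)
    (h1 : 1 ≤ t) (h2 : t ≤ z) :
    qchoose q (z+1) t = Qp q t * qchoose q z t + Qp q ((t:ℂ) - ((z:ℂ)+1)) * qchoose q z (t-1) := by
  have hz1 : z + 1 - t = (z - t) + 1 := by omega
  have hz2 : z - (t - 1) = (z - t) + 1 := by omega
  have ht : t = (t - 1) + 1 := by omega
  have key := qint_split q ((z:ℂ)+1) (((t - 1 : ℕ):ℂ) + 1)
  have c2 : ((t:ℕ) : ℂ) = ((t - 1 : ℕ) : ℂ) + 1 := by push_cast [h1]; ring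
  have c1 : ((z:ℂ)+1) - (((t - 1 : ℕ):ℂ) + 1) = ((z - t : ℕ) : ℂ) + 1 := by
    push_cast [h2, h1]; ring
  rw [c1] at key
  rw [qchoose, qchoose, qchoose, hz1, hz2, qfact_succ q z, qfact_succ q (z - t)]
  have hft : qfact q t = qfact q (t-1) * qint q (((t - 1:ℕ):ℂ)+1) := by
    conv_lhs => rw [ht]
    rw [qfact_succ]
  rw [hft, c2]
  have n1 := qfact_ne_zero q hgen z
  have n2 := qfact_ne_zero q hgen (z - t)
  have n3 := qfact_ne_zero q hgen (t - 1)
  have n4 : qint q (((z - t : ℕ):ℂ) + 1) ≠ 0 := by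
    have := hgen (z - t + 1) (by omega); push_cast at this ⊢; exact this
  have n5 : qint q (((t - 1 : ℕ):ℂ) + 1) ≠ 0 := by
    have := hgen (t - 1 + 1) (by omega); push_cast at this ⊢; exact this
  obtain ⟨x, hx⟩ : ∃ x, ((t-1:ℕ):ℂ) = x := ⟨_, rfl⟩
  obtain ⟨y, hy⟩ : ∃ y, ((z-t:ℕ):ℂ) = y := ⟨_, rfl⟩
  obtain ⟨w, hw⟩ : ∃ w, ((z:ℕ):ℂ) = w := ⟨_, rfl⟩
  simp only [hx, hy, hw] at key n4 n5 ⊢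
  field_simp
  rw [key]
  ring

theorem auxf_recurrence (q p₁ p₂ fn : ℂ) (n z₁ z₂ z : ℕ)
    (hq : q ≠ 0) (hq2 : q ^ 2 ≠ 1)
    (hgen : ∀ k : ℕ, 1 ≤ k → qint q (k : ℂ) ≠ 0) :
    auxf q p₁ p₂ fn n z₁ (z₂ + 1) (z + 1) =
      -(qint q (z₁ : ℂ) * qint q (2 * p₁ + 1 - (z₁ : ℂ))) *
          Qp q (2 * (p₁ + p₂ - (n : ℂ)) - 2 * (z : ℂ)) *
          auxf q p₁ p₂ fn n (z₁ - 1) (z₂ + 1) z +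
        qint q (2 * p₂ - (z₂ : ℂ)) * qint q ((z₂ : ℂ) + 1) * auxf q p₁ p₂ fn n z₁ z₂ z := by
  have hfz : ∀ m, qfact q m ≠ 0 := qfact_ne_zero q hgen
  -- canonical pieces
  set XX : ℕ → ℂ := fun t =>
    (-1 : ℂ) ^ t * Qp q ((t : ℂ) * (2 * (p₁ + p₂ - (n : ℂ)) + 1 - (z : ℂ))) *
      qchoose q z t *
      qfall q (2 * p₁ - (z₁ : ℂ) + (t : ℂ)) t *
      qfall q (2 * p₂ - (z₂ : ℂ) + (z : ℂ) - (t : ℂ)) (z + 1 - t) /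
      (qfact q (z₁ - t) * qfact q (z₂ + t - z)) with hXX
  set YY : ℕ → ℂ := fun t =>
    (-1 : ℂ) ^ t * Qp q ((t : ℂ) * (2 * (p₁ + p₂ - (n : ℂ)) + 1 - (z : ℂ)) - ((z : ℂ) + 1)) *
      qchoose q z (t - 1) *
      qfall q (2 * p₁ - (z₁ : ℂ) + (t : ℂ)) t *
      qfall q (2 * p₂ - (z₂ : ℂ) + (z : ℂ) - (t : ℂ)) (z + 1 - t) /
      (qfact q (z₁ - t) * qfact q (z₂ + t - z)) with hYY
  rw [auxf, auxf, auxf]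
  set T := (Finset.range (z + 1 + 1)).filter fun t => t ≤ z₁ ∧ z + 1 ≤ z₂ + 1 + t with hT
  set T₂ := (Finset.range (z + 1)).filter fun t => t ≤ z₁ ∧ z ≤ z₂ + t with hT₂
  set T₁ := (Finset.range (z + 1)).filter fun t => t ≤ z₁ - 1 ∧ z ≤ z₂ + 1 + t with hT₁
  have step1 : ∀ t ∈ T,
      (-1 : ℂ) ^ t * Qp q ((t : ℂ) * (2 * (p₁ + p₂ - (n : ℂ)) + 1 - ((z+1 : ℕ) : ℂ))) *
        qchoose q (z+1) t *
        qfall q (2 * p₁ - (z₁ : ℂ) + (t : ℂ)) t *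
        qfall q (2 * p₂ - ((z₂+1 : ℕ) : ℂ) + ((z+1 : ℕ) : ℂ) - (t : ℂ)) (z + 1 - t) /
        (qfact q (z₁ - t) * qfact q (z₂ + 1 + t - (z + 1))) =
      (if t ≤ z then XX t else 0) + (if 1 ≤ t then YY t else 0) := by
    intro t ht
    rw [hT, Finset.mem_filter, Finset.mem_range] at ht
    rw [show z₂ + 1 + t - (z + 1) = z₂ + t - z from by omega]
    rw [show (2 * p₂ - ((z₂ + 1 : ℕ) : ℂ) + ((z + 1 : ℕ) : ℂ) - (t : ℂ)) =
        (2 * p₂ - (z₂ : ℂ) + (z : ℂ) - (t : ℂ)) from by push_cast; ring]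
    rcases Nat.eq_zero_or_pos t with h0 | h1
    · subst h0
      rw [if_pos (by omega : 0 ≤ z), if_neg (by omega), add_zero]
      simp only [hXX]
      simp only [Nat.cast_zero, zero_mul, qchoose_zero q hgen]
      norm_num
    · rcases Nat.lt_or_ge z t with hgt | htz
      · have heq : t = z + 1 := by omega
        subst heq
        rw [if_neg (show ¬(z + 1 ≤ z) by omega), if_pos (show 1 ≤ z + 1 by omega), zero_add]
        simp only [hYY]
        rw [qchoose_self q hgen]
        rw [show z + 1 - 1 = z from by omega, qchoose_self q hgen]
        rw [show ((z + 1 : ℕ) : ℂ) * (2 * (p₁ + p₂ - (n : ℂ)) + 1 - ((z + 1 : ℕ) : ℂ)) =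
            ((z + 1 : ℕ) : ℂ) * (2 * (p₁ + p₂ - (n : ℂ)) + 1 - (z : ℂ)) - ((z : ℂ) + 1)
            from by push_cast; ring]
      · rw [if_pos htz, if_pos (show 1 ≤ t from h1), pascal q hgen z t h1 htz]
        simp only [hXX, hYY]
        have q1 : Qp q ((t : ℂ) * (2 * (p₁ + p₂ - (n : ℂ)) + 1 - ((z + 1 : ℕ) : ℂ))) *
            Qp q (t : ℂ) =
            Qp q ((t : ℂ) * (2 * (p₁ + p₂ - (n : ℂ)) + 1 - (z : ℂ))) := by
          rw [← Qp_add]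
          congr 1
          push_cast
          ring
        have q2 : Qp q ((t : ℂ) * (2 * (p₁ + p₂ - (n : ℂ)) + 1 - ((z + 1 : ℕ) : ℂ))) *
            Qp q ((t : ℂ) - ((z : ℂ) + 1)) =
            Qp q ((t : ℂ) * (2 * (p₁ + p₂ - (n : ℂ)) + 1 - (z : ℂ)) - ((z : ℂ) + 1)) := by
          rw [← Qp_add]
          congr 1
          push_cast
          ring
        linear_combination
          ((-1 : ℂ) ^ t * qchoose q z t * qfall q (2 * p₁ - (z₁ : ℂ) + (t : ℂ)) t *
            qfall q (2 * p₂ - (z₂ : ℂ) + (z : ℂ) - (t : ℂ)) (z + 1 - t) /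
            (qfact q (z₁ - t) * qfact q (z₂ + t - z))) * q1 +
          ((-1 : ℂ) ^ t * qchoose q z (t - 1) * qfall q (2 * p₁ - (z₁ : ℂ) + (t : ℂ)) t *
            qfall q (2 * p₂ - (z₂ : ℂ) + (z : ℂ) - (t : ℂ)) (z + 1 - t) /
            (qfact q (z₁ - t) * qfact q (z₂ + t - z))) * q2
  have hsum : (∑ t ∈ T,
      (-1 : ℂ) ^ t * Qp q ((t : ℂ) * (2 * (p₁ + p₂ - (n : ℂ)) + 1 - ((z+1 : ℕ) : ℂ))) *
        qchoose q (z+1) t *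
        qfall q (2 * p₁ - (z₁ : ℂ) + (t : ℂ)) t *
        qfall q (2 * p₂ - ((z₂+1 : ℕ) : ℂ) + ((z+1 : ℕ) : ℂ) - (t : ℂ)) (z + 1 - t) /
        (qfact q (z₁ - t) * qfact q (z₂ + 1 + t - (z + 1)))) =
      (∑ t ∈ T₂, XX t) + (∑ t ∈ T.filter (fun t => 1 ≤ t), YY t) := by
    rw [Finset.sum_congr rfl step1, Finset.sum_add_distrib, ← Finset.sum_filter, ← Finset.sum_filter]
    congr 1
    congr 1
    rw [hT, hT₂]
    ext a
    simp only [Finset.mem_filter, Finset.mem_range]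
    omega
  rw [hsum, mul_add]
  have e1 : fn * qfact q z₁ * qfact q (z₂ + 1) * ∑ t ∈ T₂, XX t =
      qint q (2 * p₂ - (z₂ : ℂ)) * qint q ((z₂ : ℂ) + 1) *
        (fn * qfact q z₁ * qfact q z₂ *
          ∑ t ∈ T₂,
            (-1 : ℂ) ^ t * Qp q ((t : ℂ) * (2 * (p₁ + p₂ - (n : ℂ)) + 1 - (z : ℂ))) *
              qchoose q z t *
              qfall q (2 * p₁ - (z₁ : ℂ) + (t : ℂ)) t *
              qfall q (2 * p₂ - (z₂ : ℂ) + (z : ℂ) - (t : ℂ)) (z - t) /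
              (qfact q (z₁ - t) * qfact q (z₂ + t - z))) := by
    have h1 : ∀ t ∈ T₂, XX t =
        qint q (2 * p₂ - (z₂ : ℂ)) *
          ((-1 : ℂ) ^ t * Qp q ((t : ℂ) * (2 * (p₁ + p₂ - (n : ℂ)) + 1 - (z : ℂ))) *
            qchoose q z t *
            qfall q (2 * p₁ - (z₁ : ℂ) + (t : ℂ)) t *
            qfall q (2 * p₂ - (z₂ : ℂ) + (z : ℂ) - (t : ℂ)) (z - t) /
            (qfact q (z₁ - t) * qfact q (z₂ + t - z))) := by
      intro t ht
      rw [hT₂, Finset.mem_filter, Finset.mem_range] at ht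
      have htz : t ≤ z := by omega
      rw [hXX]
      simp only
      rw [show z + 1 - t = (z - t) + 1 from by omega, qfall_succ]
      rw [show 2 * p₂ - (z₂ : ℂ) + (z : ℂ) - (t : ℂ) - ((z - t : ℕ) : ℂ) = 2 * p₂ - (z₂ : ℂ)
        from by push_cast [htz]; ring]
      ring
    rw [Finset.sum_congr rfl h1, ← Finset.mul_sum, qfact_succ q z₂]
    ring
  have e2 : fn * qfact q z₁ * qfact q (z₂ + 1) * ∑ t ∈ T.filter (fun t => 1 ≤ t), YY t =
      -(qint q (z₁ : ℂ) * qint q (2 * p₁ + 1 - (z₁ : ℂ))) *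
        Qp q (2 * (p₁ + p₂ - (n : ℂ)) - 2 * (z : ℂ)) *
        (fn * qfact q (z₁ - 1) * qfact q (z₂ + 1) *
          ∑ t ∈ T₁,
            (-1 : ℂ) ^ t * Qp q ((t : ℂ) * (2 * (p₁ + p₂ - (n : ℂ)) + 1 - (z : ℂ))) *
              qchoose q z t *
              qfall q (2 * p₁ - ((z₁ - 1 : ℕ) : ℂ) + (t : ℂ)) t *
              qfall q (2 * p₂ - ((z₂ + 1 : ℕ) : ℂ) + (z : ℂ) - (t : ℂ)) (z - t) /
              (qfact q (z₁ - 1 - t) * qfact q (z₂ + 1 + t - z))) := by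
    rcases Nat.eq_zero_or_pos z₁ with hz0 | hz0
    · subst hz0
      have hemp : T.filter (fun t => 1 ≤ t) = ∅ := by
        rw [hT]
        ext a
        simp only [Finset.mem_filter, Finset.mem_range, Finset.notMem_empty, iff_false,
          Finset.filter_filter]
        omega
      rw [hemp, Finset.sum_empty, mul_zero]
      rw [show ((0:ℕ):ℂ) = (0:ℂ) from by norm_num, qint_zero]
      ring
    · have h1z : 1 ≤ z₁ := hz0
      have c : ((z₁ - 1 : ℕ) : ℂ) = (z₁ : ℂ) - 1 := by rw [Nat.cast_sub h1z]; norm_num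
      have hmap : T.filter (fun t => 1 ≤ t) =
          T₁.map ⟨fun s => s + 1, add_left_injective 1⟩ := by
        rw [hT, hT₁]
        ext a
        simp only [Finset.mem_filter, Finset.mem_range, Finset.mem_map,
          Function.Embedding.coeFn_mk, Finset.filter_filter]
        constructor
        · rintro ⟨ha, ⟨h1, h2⟩, h3⟩
          exact ⟨a - 1, ⟨by omega, by omega, by omega⟩, by omega⟩
        · rintro ⟨s, ⟨hs, h1, h2⟩, rfl⟩
          exact ⟨by omega, ⟨by omega, by omega⟩, by omega⟩
      rw [hmap, Finset.sum_map]
      simp only [Function.Embedding.coeFn_mk]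
      have h2 : ∀ s ∈ T₁, YY (s + 1) =
          (-(qint q (2 * p₁ + 1 - (z₁ : ℂ))) * Qp q (2 * (p₁ + p₂ - (n : ℂ)) - 2 * (z : ℂ))) *
            ((-1 : ℂ) ^ s * Qp q ((s : ℂ) * (2 * (p₁ + p₂ - (n : ℂ)) + 1 - (z : ℂ))) *
              qchoose q z s *
              qfall q (2 * p₁ - ((z₁ - 1 : ℕ) : ℂ) + (s : ℂ)) s *
              qfall q (2 * p₂ - ((z₂ + 1 : ℕ) : ℂ) + (z : ℂ) - (s : ℂ)) (z - s) /
              (qfact q (z₁ - 1 - s) * qfact q (z₂ + 1 + s - z))) := by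
        intro s hs
        rw [hT₁, Finset.mem_filter, Finset.mem_range] at hs
        simp only [hYY]
        rw [show (s + 1) - 1 = s from by omega]
        rw [show z + 1 - (s + 1) = z - s from by omega]
        rw [show z₁ - (s + 1) = z₁ - 1 - s from by omega]
        rw [show z₂ + (s + 1) - z = z₂ + 1 + s - z from by omega]
        rw [qfall_succ q (2 * p₁ - (z₁ : ℂ) + ((s + 1 : ℕ) : ℂ)) s]
        rw [show (2 * p₁ - (z₁ : ℂ) + ((s + 1 : ℕ) : ℂ)) =
            (2 * p₁ - ((z₁ - 1 : ℕ) : ℂ) + (s : ℂ)) from by push_cast; rw [c]; ring]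
        rw [show (2 * p₁ - ((z₁ - 1 : ℕ) : ℂ) + (s : ℂ) - (s : ℂ)) =
            2 * p₁ + 1 - (z₁ : ℂ) from by rw [c]; ring]
        rw [show (2 * p₂ - (z₂ : ℂ) + (z : ℂ) - ((s + 1 : ℕ) : ℂ)) =
            (2 * p₂ - ((z₂ + 1 : ℕ) : ℂ) + (z : ℂ) - (s : ℂ)) from by push_cast; ring]
        rw [show ((s + 1 : ℕ) : ℂ) * (2 * (p₁ + p₂ - (n : ℂ)) + 1 - (z : ℂ)) - ((z : ℂ) + 1) =
            ((s : ℂ) * (2 * (p₁ + p₂ - (n : ℂ)) + 1 - (z : ℂ))) +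
              (2 * (p₁ + p₂ - (n : ℂ)) - 2 * (z : ℂ)) from by push_cast; ring]
        rw [Qp_add, pow_succ]
        ring
      rw [Finset.sum_congr rfl h2, ← Finset.mul_sum]
      have hfs : qfact q z₁ = qfact q (z₁ - 1) * qint q (z₁ : ℂ) := by
        have := qfact_succ q (z₁ - 1)
        rw [show z₁ - 1 + 1 = z₁ from by omega, c] at this
        rw [this]
        ring_nf
      rw [hfs]
      ring
  rw [e1, e2]
  ring
end

section
/- The N-dimensional color representation closes: for ε with ε^{2N} = 1, ε² a primitive N-th root of unity, and p ∈ ℂ, the operators on the N-dimensional space with basis e_0,…,e_{N−1} defined by (X⁺)^a_b = ([2p−a]_ε[a+1]_ε)^{1/2} δ_{a+1,b} (with (X⁺)^{N−1}_N-term absent since [N]_ε = 0), (X⁻)^a_b = ([2p−a+1]_ε[a]_ε)^{1/2} δ_{a−1,b}, and K e_a = ε^{2p−2a} e_a, satisfy K X^± K^{−1} = ε^{±2} X^± and [X⁺, X⁻] = (K − K^{−1})/(ε − ε^{−1}). -/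
open Finset

lemma Qp_neg (q x : ℂ) : Qp q (-x) = (Qp q x)⁻¹ := by
  simp [Qp, ← Complex.exp_neg, neg_mul]

lemma Qp_ne_zero (q x : ℂ) : Qp q x ≠ 0 := Complex.exp_ne_zero _

lemma Qp_one {q : ℂ} (hq : q ≠ 0) : Qp q 1 = q := by simp [Qp, Complex.exp_log hq]

lemma Qp_neg_one {q : ℂ} (hq : q ≠ 0) : Qp q (-1) = q⁻¹ := by
  rw [show (-1 : ℂ) = -(1:ℂ) by norm_num, Qp_neg, Qp_one hq]

lemma Qp_nat {q : ℂ} (hq : q ≠ 0) (n : ℕ) : Qp q (n : ℂ) = q ^ n := by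
  simp [Qp, Complex.exp_nat_mul, Complex.exp_log hq]

lemma qint_one {q : ℂ} (hq : q ≠ 0) (hqq : q - q⁻¹ ≠ 0) : qint q 1 = 1 := by
  rw [qint, Qp_neg, Qp_one hq, div_self hqq]

lemma qint_key (q x y : ℂ) (hq : q ≠ 0) (hqq : q - q⁻¹ ≠ 0) :
    qint q x * qint q y - qint q (x + 1) * qint q (y - 1) = qint q (x - y + 1) := by
  have hqw : q * q⁻¹ = 1 := mul_inv_cancel₀ hq
  have e1 : Qp q (x + 1) = Qp q x * q := by rw [Qp_add, Qp_one hq]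
  have e2 : Qp q (-(x + 1)) = Qp q (-x) * q⁻¹ := by
    rw [show -(x + 1) = -x + -1 by ring, Qp_add, Qp_neg_one hq]
  have e3 : Qp q (y - 1) = Qp q y * q⁻¹ := by
    rw [show y - 1 = y + -1 by ring, Qp_add, Qp_neg_one hq]
  have e4 : Qp q (-(y - 1)) = Qp q (-y) * q := by
    rw [show -(y - 1) = -y + 1 by ring, Qp_add, Qp_one hq]
  have e5 : Qp q (x - y + 1) = Qp q x * Qp q (-y) * q := by
    rw [show x - y + 1 = x + -y + 1 by ring, Qp_add, Qp_add, Qp_one hq]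
  have e6 : Qp q (-(x - y + 1)) = Qp q (-x) * Qp q y * q⁻¹ := by
    rw [show -(x - y + 1) = -x + y + -1 by ring, Qp_add, Qp_add, Qp_neg_one hq]
  simp only [qint, e1, e2, e3, e4, e5, e6, div_mul_div_comm, ← sub_div]
  rw [div_eq_div_iff (mul_ne_zero hqq hqq) hqq]
  linear_combination (-(q - q⁻¹) * (Qp q x - Qp q (-x)) * (Qp q y - Qp q (-y))) * hqw

lemma qint_step (q P k : ℂ) (hq : q ≠ 0) (hqq : q - q⁻¹ ≠ 0) :
    qint q (2 * P - (k + 1)) * qint q (k + 1 + 1) - qint q (2 * P - k) * qint q (k + 1)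
      = qint q (2 * P - 2 * (k + 1)) := by
  have h := qint_key q (2 * P - (k + 1)) (k + 2) hq hqq
  rw [show 2 * P - (k + 1) + 1 = 2 * P - k by ring, show (k : ℂ) + 2 - 1 = k + 1 by ring,
    show 2 * P - (k + 1) - (k + 2) + 1 = 2 * P - 2 * (k + 1) by ring] at h
  rw [show (k : ℂ) + 1 + 1 = k + 2 by ring]
  exact h

lemma sum_fin_ite (N m : ℕ) (f : ℕ → ℂ) :
    ∑ c : Fin N, (if (c : ℕ) = m then f (c : ℕ) else 0) = if m < N then f m else 0 := by
  by_cases h : m < N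
  · rw [if_pos h, Finset.sum_eq_single (⟨m, h⟩ : Fin N)]
    · simp
    · intro b _ hb
      rw [if_neg]
      simpa [Fin.ext_iff] using hb
    · simp
  · rw [if_neg h]
    apply Finset.sum_eq_zero
    intro c _
    rw [if_neg]
    exact fun hc => h (hc ▸ c.isLt)

theorem finite_color_rep_relations (N : ℕ) (hN : 2 ≤ N) (ε p : ℂ) (hε : ε ^ (2 * N) = 1)
    (hprim : IsPrimitiveRoot (ε ^ 2) N) (d : ℕ → ℂ)
    (hd : ∀ a : ℕ, (d a) ^ 2 = qint ε (2 * p - (a : ℂ)) * qint ε ((a : ℂ) + 1)) :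
    let Xp : Matrix (Fin N) (Fin N) ℂ :=
      Matrix.of fun a b => if (b : ℕ) = (a : ℕ) + 1 then d (a : ℕ) else 0
    let Xm : Matrix (Fin N) (Fin N) ℂ :=
      Matrix.of fun a b => if (a : ℕ) = (b : ℕ) + 1 then d (b : ℕ) else 0
    let K : Matrix (Fin N) (Fin N) ℂ :=
      Matrix.diagonal fun a => Qp ε (2 * p - 2 * ((a : ℕ) : ℂ))
    K * Xp * K⁻¹ = (ε ^ 2) • Xp ∧
    K * Xm * K⁻¹ = (ε ^ 2)⁻¹ • Xm ∧
    Xp * Xm - Xm * Xp = (ε - ε⁻¹)⁻¹ • (K - K⁻¹) := by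
  intro Xp Xm K
  -- basic nonvanishing facts
  have hε0 : ε ≠ 0 := by
    intro h
    rw [h, zero_pow (by omega)] at hε
    exact zero_ne_one hε
  have hε2 : ε ^ 2 ≠ 1 := by
    have := hprim.pow_ne_one_of_pos_of_lt (l := 1) one_ne_zero (by omega)
    simpa using this
  have hqq : ε - ε⁻¹ ≠ 0 := by
    intro h
    apply hε2
    have h1 : ε = ε⁻¹ := sub_eq_zero.mp h
    calc ε ^ 2 = ε * ε := sq ε
      _ = ε * ε⁻¹ := by rw [← h1]
      _ = 1 := mul_inv_cancel₀ hε0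
  -- inverse of K
  have hKinv : K⁻¹ = Matrix.diagonal fun a : Fin N => (Qp ε (2 * p - 2 * ((a : ℕ) : ℂ)))⁻¹ := by
    apply Matrix.inv_eq_right_inv
    rw [Matrix.diagonal_mul_diagonal]
    ext a b
    by_cases hab : a = b <;>
      simp [hab, Matrix.diagonal_apply, mul_inv_cancel₀ (Qp_ne_zero ε _), Matrix.one_apply]
  have hQ2 : Qp ε 2 = ε ^ 2 := by
    rw [show (2:ℂ) = 1 + 1 by norm_num, Qp_add, Qp_one hε0, sq]
  have hQ2i : Qp ε (-2) = (ε ^ 2)⁻¹ := by rw [Qp_neg, hQ2]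
  have hqint : ∀ x : ℂ, (ε - ε⁻¹)⁻¹ * (Qp ε x - (Qp ε x)⁻¹) = qint ε x := fun x => by
    rw [qint, Qp_neg, div_eq_inv_mul]
  have hNz : qint ε ((N : ℕ) : ℂ) = 0 := by
    have h2 : ε ^ N * ε ^ N = 1 := by rw [← pow_add, ← two_mul]; exact hε
    rw [qint, Qp_neg, Qp_nat hε0, inv_eq_of_mul_eq_one_right h2, sub_self, zero_div]
  refine ⟨?_, ?_, ?_⟩
  · -- K Xp K⁻¹ = ε² Xp
    rw [hKinv]
    simp only [Xp, K]
    ext a b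
    rw [Matrix.mul_diagonal, Matrix.diagonal_mul]
    simp only [Matrix.smul_apply, Matrix.of_apply, smul_eq_mul]
    split_ifs with h
    · have hb : ((b : ℕ) : ℂ) = ((a : ℕ) : ℂ) + 1 := by exact_mod_cast congrArg Nat.cast h
      rw [show 2 * p - 2 * ((b : ℕ) : ℂ) = (2 * p - 2 * ((a : ℕ) : ℂ)) + -2 by rw [hb]; ring,
        Qp_add, hQ2i]
      have h1 := Qp_ne_zero ε (2 * p - 2 * ((a : ℕ) : ℂ))
      have h2 : (ε : ℂ) ^ 2 ≠ 0 := pow_ne_zero 2 hε0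
      field_simp
      ring_nf; rw [mul_right_comm, mul_inv_cancel₀ (Qp_ne_zero _ _), one_mul]
    · simp
  · -- K Xm K⁻¹ = ε⁻² Xm
    rw [hKinv]
    simp only [Xm, K]
    ext a b
    rw [Matrix.mul_diagonal, Matrix.diagonal_mul]
    simp only [Matrix.smul_apply, Matrix.of_apply, smul_eq_mul]
    split_ifs with h
    · have ha : ((a : ℕ) : ℂ) = ((b : ℕ) : ℂ) + 1 := by exact_mod_cast congrArg Nat.cast h
      rw [show 2 * p - 2 * ((b : ℕ) : ℂ) = (2 * p - 2 * ((a : ℕ) : ℂ)) + 2 by rw [ha]; ring,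
        Qp_add, hQ2]
      have h1 := Qp_ne_zero ε (2 * p - 2 * ((a : ℕ) : ℂ))
      have h2 : (ε : ℂ) ^ 2 ≠ 0 := pow_ne_zero 2 hε0
      field_simp
      ring_nf; rw [mul_right_comm, mul_inv_cancel₀ (Qp_ne_zero _ _), one_mul]
    · simp
  · -- commutator
    rw [hKinv]
    simp only [Xp, Xm, K]
    ext a b
    simp only [Matrix.sub_apply, Matrix.mul_apply, Matrix.smul_apply, Matrix.of_apply,
      smul_eq_mul, Matrix.diagonal_apply]
    by_cases hab : a = b
    · subst hab
      simp only [eq_self_iff_true, if_true]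
      have S1 : (∑ c : Fin N, (if (c : ℕ) = (a : ℕ) + 1 then d (a : ℕ) else 0) *
          (if (c : ℕ) = (a : ℕ) + 1 then d (a : ℕ) else 0))
          = if (a : ℕ) + 1 < N then d (a : ℕ) * d (a : ℕ) else 0 := by
        rw [← sum_fin_ite N ((a : ℕ) + 1) (fun _ => d (a : ℕ) * d (a : ℕ))]
        exact Finset.sum_congr rfl fun c _ => by split_ifs <;> ring
      rw [S1]
      rcases hA : (a : ℕ) with _ | k
      · -- bottom row
        have S2 : (∑ c : Fin N, (if 0 = (c : ℕ) + 1 then d (c : ℕ) else 0) *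
            (if 0 = (c : ℕ) + 1 then d (c : ℕ) else 0)) = 0 := by
          apply Finset.sum_eq_zero
          intro c _
          rw [if_neg (by omega), zero_mul]
        rw [S2, if_pos (by omega), hqint, sub_zero, ← pow_two, hd 0]
        push_cast
        norm_num [qint_one hε0 hqq]
      · -- higher rows
        have hk : k < N := by have := a.isLt; omega
        have S2 : (∑ c : Fin N, (if k + 1 = (c : ℕ) + 1 then d (c : ℕ) else 0) *
            (if k + 1 = (c : ℕ) + 1 then d (c : ℕ) else 0))
            = d k * d k := by
          have e : ∀ c : Fin N, ((if k + 1 = (c : ℕ) + 1 then d (c : ℕ) else 0) *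
              (if k + 1 = (c : ℕ) + 1 then d (c : ℕ) else 0))
              = if (c : ℕ) = k then d (c : ℕ) * d (c : ℕ) else 0 := by
            intro c
            by_cases h : k + 1 = (c : ℕ) + 1
            · rw [if_pos h, if_pos (show (c : ℕ) = k by omega)]
            · rw [if_neg h, zero_mul, if_neg (show ¬(c : ℕ) = k by omega)]
          rw [Finset.sum_congr rfl fun c _ => e c]
          simpa [hk] using sum_fin_ite N k (fun n => d n * d n)
        rw [S2, hqint]
        by_cases hlt : k + 1 + 1 < N
        · rw [if_pos hlt, ← pow_two, show d k * d k = d k ^ 2 by ring, hd (k + 1), hd k]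
          push_cast
          exact qint_step ε p (k : ℂ) hε0 hqq
        · -- top row: k + 2 = N
          rw [if_neg hlt]
          have hNk : k + 2 = N := by have := a.isLt; omega
          have h := qint_step ε p (k : ℂ) hε0 hqq
          have hz : qint ε ((k : ℂ) + 1 + 1) = 0 := by
            rw [show (k : ℂ) + 1 + 1 = ((k + 2 : ℕ) : ℂ) by push_cast; ring, hNk]
            exact hNz
          rw [hz, mul_zero] at h
          rw [show d k * d k = d k ^ 2 by ring, hd k]
          push_cast
          exact h
    · -- off-diagonal
      rw [if_neg hab, if_neg hab]
      have z1 : ∀ c : Fin N, (if (c : ℕ) = (a : ℕ) + 1 then d (a : ℕ) else 0) *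
          (if (c : ℕ) = (b : ℕ) + 1 then d (b : ℕ) else 0) = 0 := by
        intro c
        split_ifs with h1 h2 <;>
          first
            | exact absurd (Fin.val_injective (by omega) : a = b) hab
            | ring
      have z2 : ∀ c : Fin N, (if (a : ℕ) = (c : ℕ) + 1 then d (c : ℕ) else 0) *
          (if (b : ℕ) = (c : ℕ) + 1 then d (c : ℕ) else 0) = 0 := by
        intro c
        split_ifs with h1 h2 <;>
          first
            | exact absurd (Fin.val_injective (by omega) : a = b) hab
            | ring
      rw [Finset.sum_eq_zero fun c _ => z1 c, Finset.sum_eq_zero fun c _ => z2 c]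
      ring
end
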